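/- Decentralized Muon without speedup: consider the scalar recursion x_{k+1} = x_k(1 − α/√(x_k² + σ²)) with σ > 0 and 0 < α < σ. Then for every k, |x_{k+1}| ≥ (1 − α/σ)|x_k|, and hence |x_k| ≥ (1 − α/σ)^k |x_0|; consequently, achieving |x_T| ≤ ε|x_0| (with x_0 ≠ 0, 0 < ε < 1) requires T ≥ log(1/ε)/log(1/(1 − α/σ)). -/
import Mathlib


/-- Decentralized Muon without speedup: for the recursion
`x_{k+1} = x_k (1 − α/√(x_k² + σ²))` with `0 < α < σ`, one has
`|x_{k+1}| ≥ (1 − α/σ)|x_k|`, hence `|x_k| ≥ (1 − α/σ)^k |x_0|`, and achieving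
`|x_T| ≤ ε |x_0|` requires `T ≥ log(1/ε) / log(1/(1 − α/σ))`. -/
theorem dsgd_muon_no_speedup (σ α : ℝ) (hσ : 0 < σ) (hα0 : 0 < α) (hασ : α < σ)
    (x : ℕ → ℝ)
    (hrec : ∀ k, x (k + 1) = x k * (1 - α / Real.sqrt ((x k) ^ 2 + σ ^ 2))) :
    (∀ k, (1 - α / σ) * |x k| ≤ |x (k + 1)|) ∧
    (∀ k, (1 - α / σ) ^ k * |x 0| ≤ |x k|) ∧
    (∀ (T : ℕ) (ε : ℝ), x 0 ≠ 0 → 0 < ε → ε < 1 → |x T| ≤ ε * |x 0| →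
      Real.log (1 / ε) / Real.log (1 / (1 - α / σ)) ≤ T) := by
  set c : ℝ := 1 - α / σ with hc
  have hc0 : 0 < c := by
    have : α / σ < 1 := (div_lt_one hσ).mpr hασ
    rw [hc]; linarith
  have hc1 : c < 1 := by
    have : 0 < α / σ := div_pos hα0 hσ
    rw [hc]; linarith
  have step : ∀ k, c * |x k| ≤ |x (k + 1)| := by
    intro k
    have hsq : σ ≤ Real.sqrt ((x k) ^ 2 + σ ^ 2) := by
      rw [Real.le_sqrt hσ.le (by positivity)]
      nlinarith [sq_nonneg (x k)]
    have hs0 : 0 < Real.sqrt ((x k) ^ 2 + σ ^ 2) := lt_of_lt_of_le hσ hsq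
    have hfac : c ≤ 1 - α / Real.sqrt ((x k) ^ 2 + σ ^ 2) := by
      have : α / Real.sqrt ((x k) ^ 2 + σ ^ 2) ≤ α / σ :=
        div_le_div_of_nonneg_left hα0.le hσ hsq
      rw [hc]; linarith
    have hfac0 : 0 < 1 - α / Real.sqrt ((x k) ^ 2 + σ ^ 2) := lt_of_lt_of_le hc0 hfac
    rw [hrec k, abs_mul, abs_of_pos hfac0, mul_comm c]
    exact mul_le_mul_of_nonneg_left hfac (abs_nonneg _)
  have geom : ∀ k, c ^ k * |x 0| ≤ |x k| := by
    intro k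
    induction k with
    | zero => simp
    | succ n ih =>
      calc c ^ (n + 1) * |x 0| = c * (c ^ n * |x 0|) := by ring
        _ ≤ c * |x n| := mul_le_mul_of_nonneg_left ih hc0.le
        _ ≤ |x (n + 1)| := step n
  refine ⟨step, geom, ?_⟩
  intro T ε hx0 hε0 hε1 hT
  have hx0' : 0 < |x 0| := abs_pos.mpr hx0
  have hcT : c ^ T ≤ ε := by
    have h1 : c ^ T * |x 0| ≤ ε * |x 0| := le_trans (geom T) hT
    exact le_of_mul_le_mul_right h1 hx0'
  have hlogc : Real.log c < 0 := Real.log_neg hc0 hc1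
  have hlogε : Real.log ε < 0 := Real.log_neg hε0 hε1
  have hlog : (T : ℝ) * Real.log c ≤ Real.log ε := by
    have := Real.log_le_log (pow_pos hc0 T) hcT
    rwa [Real.log_pow] at this
  rw [one_div ε, one_div c, Real.log_inv, Real.log_inv]
  rw [div_le_iff₀ (by linarith : (0:ℝ) < -Real.log c)]
  linarith
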